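/- arXiv:2510.21077 — 3 statements merged into one kernel-verified Lean document; each statement's English description precedes it below -/
import Mathlib

section
/- Rank-one perturbation trace inequality: for z ∈ ℂ⁺ with ν = Im(z), an n×n complex matrix A, an n×n Hermitian matrix B, τ ∈ ℝ, and q ∈ ℂ^n, we have |tr(((B − zI)^{−1} − (B + τqq* − zI)^{−1})A)| ≤ ‖A‖/ν. -/
open Matrix

variable {n : ℕ}

/-- helper: Hermitian quadratic form is real -/
lemma herm_dot_im {M : Matrix (Fin n) (Fin n) ℂ} (hM : M.IsHermitian) (v : Fin n → ℂ) :
    (star v ⬝ᵥ (M *ᵥ v)).im = 0 := by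
  have h : star v ⬝ᵥ (M *ᵥ v) = star (star v ⬝ᵥ (M *ᵥ v)) := by
    nth_rewrite 1 [Matrix.star_dotProduct]
    rw [Matrix.star_mulVec, ← Matrix.dotProduct_mulVec, hM.eq]
  have := congrArg Complex.im h
  simp at this
  linarith

lemma dot_star_self (v : Fin n → ℂ) :
    star v ⬝ᵥ v = (∑ i, Complex.normSq (v i) : ℝ) := by
  push_cast
  simp [dotProduct, Complex.normSq_eq_conj_mul_self]

/-- invertibility of the resolvent -/
lemma isUnit_sub_smul {M : Matrix (Fin n) (Fin n) ℂ} (hM : M.IsHermitian) {z : ℂ}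
    (hz : z.im ≠ 0) : IsUnit (M - z • 1) := by
  rw [← Matrix.mulVec_injective_iff_isUnit]
  have : LinearMap.ker (M - z • 1).mulVecLin = ⊥ := by
    rw [LinearMap.ker_eq_bot']
    intro v hv
    simp only [Matrix.mulVecLin_apply, Matrix.sub_mulVec, Matrix.smul_mulVec,
      Matrix.one_mulVec, sub_eq_zero] at hv
    have h1 : star v ⬝ᵥ (M *ᵥ v) = z * (star v ⬝ᵥ v) := by
      rw [hv]
      simp [dotProduct_smul, smul_eq_mul]
    have h2 := herm_dot_im hM v
    rw [h1, dot_star_self] at h2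
    simp [Complex.mul_im] at h2
    have hsum : ∑ i, Complex.normSq (v i) = 0 := by
      rcases h2 with h | h
      · exact absurd h hz
      · exact h
    funext i  -- v = 0
    have : Complex.normSq (v i) = 0 := by
      have hnn : ∀ j ∈ Finset.univ, 0 ≤ Complex.normSq (v j) := fun j _ => Complex.normSq_nonneg _
      exact (Finset.sum_eq_zero_iff_of_nonneg hnn).1 hsum i (Finset.mem_univ i)
    simpa using Complex.normSq_eq_zero.mp this
  have hinj : Function.Injective (M - z • 1).mulVecLin := LinearMap.ker_eq_bot.mp this
  exact hinj

/-- resolvent difference identity -/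
lemma resolvent_sub {M N : Matrix (Fin n) (Fin n) ℂ} (hM : IsUnit M) (hN : IsUnit N) :
    M⁻¹ - N⁻¹ = M⁻¹ * (N - M) * N⁻¹ := by
  rw [Matrix.isUnit_iff_isUnit_det] at hM hN
  rw [mul_sub, sub_mul, Matrix.nonsing_inv_mul _ hM, mul_assoc, Matrix.mul_nonsing_inv _ hN,
    one_mul, mul_one]

lemma resolv_conjTranspose {M : Matrix (Fin n) (Fin n) ℂ} (hM : M.IsHermitian) (z : ℂ) :
    ((M - z • 1)⁻¹)ᴴ = (M - star z • 1)⁻¹ := by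
  rw [Matrix.conjTranspose_nonsing_inv, Matrix.conjTranspose_sub, hM.eq,
    Matrix.conjTranspose_smul, Matrix.conjTranspose_one]

/-- Ward identity -/
lemma ward {M : Matrix (Fin n) (Fin n) ℂ} (hM : M.IsHermitian) {z : ℂ} (hz : z.im ≠ 0)
    (q : Fin n → ℂ) :
    (star q ⬝ᵥ ((M - z • 1)⁻¹ *ᵥ q)).im
      = z.im * ∑ i, Complex.normSq (((M - z • 1)⁻¹ *ᵥ q) i) := by
  set R := (M - z • 1)⁻¹ with hR
  have hzbar : (star z).im ≠ 0 := by simpa using hz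
  have hU : IsUnit (M - z • 1) := isUnit_sub_smul hM hz
  have hUbar : IsUnit (M - star z • 1) := isUnit_sub_smul hM hzbar
  have hT : Rᴴ = (M - star z • 1)⁻¹ := resolv_conjTranspose hM z
  have hdiff : Rᴴ - R = (star z - z) • (Rᴴ * R) := by
    rw [hT, hR, resolvent_sub hUbar hU, ← hT, ← hR]
    have : (M - z • 1) - (M - star z • 1) = (star z - z) • (1 : Matrix (Fin n) (Fin n) ℂ) := by
      rw [sub_smul]; abel
    rw [this]
    rw [Matrix.mul_smul, Matrix.smul_mul, Matrix.mul_one]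
  set x := star q ⬝ᵥ (R *ᵥ q) with hx
  have hconj : star q ⬝ᵥ (Rᴴ *ᵥ q) = star x := by
    rw [hx]
    rw [Matrix.star_dotProduct, Matrix.star_mulVec, Matrix.conjTranspose_conjTranspose,
      ← Matrix.dotProduct_mulVec]
  have hrr : star q ⬝ᵥ ((Rᴴ * R) *ᵥ q)
      = ((∑ i, Complex.normSq ((R *ᵥ q) i) : ℝ) : ℂ) := by
    rw [← Matrix.mulVec_mulVec, Matrix.dotProduct_mulVec, ← Matrix.star_mulVec,
      dot_star_self]
  have key : star x - x = (star z - z) * ((∑ i, Complex.normSq ((R *ᵥ q) i) : ℝ) : ℂ) := by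
    have := congrArg (fun N => star q ⬝ᵥ (N *ᵥ q)) hdiff
    simpa [Matrix.sub_mulVec, Matrix.smul_mulVec, hconj, hrr, smul_eq_mul] using this
  have := congrArg Complex.im key
  simp [Complex.sub_im, Complex.mul_im, Complex.conj_im] at this
  linarith

/-- the scalar inequality -/
lemma scalar_key (τ : ℝ) (a b : ℂ) (h : a - b = τ * a * b) (ha : 0 ≤ a.im) (hb : 0 ≤ b.im) :
    τ ^ 2 * a.im * b.im ≤ 1 := by
  rcases eq_or_lt_of_le hb with hb0 | hbpos
  · rw [← hb0]; simp
  rcases eq_or_ne τ 0 with ht | ht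
  · subst ht
    simp at h ⊢
  set c : ℂ := 1 - τ * b with hc
  have hcim : c.im = -(τ * b.im) := by simp [hc]
  have hcne : Complex.normSq c ≠ 0 := by
    intro h0
    have := Complex.normSq_eq_zero.mp h0
    rw [hc, sub_eq_zero] at this
    have : ((τ : ℂ) * b).im = (1 : ℂ).im := by rw [← this]
    simp at this
    rcases this with h | h
    · exact ht h
    · linarith
  have hcne' : c ≠ 0 := fun h0 => hcne (by rw [h0]; simp)
  have hac : a * c = b := by rw [hc]; linear_combination h
  have ha2 : a = b / c := by rw [eq_div_iff hcne']; exact hac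
  have hcre : c.re = 1 - τ * b.re := by simp [hc]
  have hN : 0 < Complex.normSq c := lt_of_le_of_ne (Complex.normSq_nonneg c) (Ne.symm hcne)
  have haim : a.im = b.im / Complex.normSq c := by
    rw [ha2, Complex.div_im, hcim, hcre]
    field_simp
    ring
  rw [haim]
  have hrw : τ ^ 2 * (b.im / Complex.normSq c) * b.im
      = (τ * b.im) ^ 2 / Complex.normSq c := by ring
  rw [hrw, div_le_one hN, Complex.normSq_apply]
  rw [hcim]
  nlinarith [sq_nonneg c.re]

lemma vecMulVec_mulVec' (u v w : Fin n → ℂ) :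
    Matrix.vecMulVec u v *ᵥ w = (v ⬝ᵥ w) • u := by
  ext i
  simp only [Matrix.mulVec, dotProduct, Matrix.vecMulVec_apply, Pi.smul_apply,
    smul_eq_mul, Finset.sum_mul]
  exact Finset.sum_congr rfl fun j _ => by ring

lemma trace_vecMulVec_mul (u v : Fin n → ℂ) (M : Matrix (Fin n) (Fin n) ℂ) :
    (Matrix.vecMulVec u v * M).trace = v ⬝ᵥ (M *ᵥ u) := by
  simp only [Matrix.trace, Matrix.diag, Matrix.mul_apply, Matrix.vecMulVec_apply,
    dotProduct, Matrix.mulVec]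
  rw [Finset.sum_comm]
  exact Finset.sum_congr rfl fun j _ => by
    rw [Finset.mul_sum]
    exact Finset.sum_congr rfl fun i _ => by ring

lemma dot_conjT (R : Matrix (Fin n) (Fin n) ℂ) (q : Fin n → ℂ) :
    star q ⬝ᵥ (Rᴴ *ᵥ q) = star (star q ⬝ᵥ (R *ᵥ q)) := by
  rw [Matrix.star_dotProduct, Matrix.star_mulVec, Matrix.conjTranspose_conjTranspose,
    ← Matrix.dotProduct_mulVec]

lemma cs_bound (A : Matrix (Fin n) (Fin n) ℂ) (u v : Fin n → ℂ) :
    ‖star u ⬝ᵥ (A *ᵥ v)‖ ≤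
      ‖(Matrix.toEuclideanCLM (𝕜 := ℂ) A :
          EuclideanSpace ℂ (Fin n) →L[ℂ] EuclideanSpace ℂ (Fin n))‖ *
        Real.sqrt (∑ i, Complex.normSq (u i)) * Real.sqrt (∑ i, Complex.normSq (v i)) := by
  set u' : EuclideanSpace ℂ (Fin n) := (WithLp.equiv 2 _).symm u with hu'
  set v' : EuclideanSpace ℂ (Fin n) := (WithLp.equiv 2 _).symm v with hv'
  set T := (Matrix.toEuclideanCLM (𝕜 := ℂ) A :
      EuclideanSpace ℂ (Fin n) →L[ℂ] EuclideanSpace ℂ (Fin n)) with hT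
  have h1 : (inner ℂ u' (T v') : ℂ) = star u ⬝ᵥ (A *ᵥ v) := by
    rw [EuclideanSpace.inner_eq_star_dotProduct, hT, hv', hu']
    simp [Matrix.toEuclideanCLM_toLp, dotProduct_comm]
  have hnu : ‖u'‖ = Real.sqrt (∑ i, Complex.normSq (u i)) := by
    rw [EuclideanSpace.norm_eq]
    congr 1
    exact Finset.sum_congr rfl fun i _ => by
      rw [Complex.normSq_eq_norm_sq]; rfl
  have hnv : ‖v'‖ = Real.sqrt (∑ i, Complex.normSq (v i)) := by
    rw [EuclideanSpace.norm_eq]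
    congr 1
    exact Finset.sum_congr rfl fun i _ => by
      rw [Complex.normSq_eq_norm_sq]; rfl
  calc ‖star u ⬝ᵥ (A *ᵥ v)‖ = ‖(inner ℂ u' (T v') : ℂ)‖ := by
        rw [h1]
    _ ≤ ‖u'‖ * ‖T v'‖ := norm_inner_le_norm u' (T v')
    _ ≤ ‖u'‖ * (‖T‖ * ‖v'‖) :=
        mul_le_mul_of_nonneg_left (T.le_opNorm v') (norm_nonneg u')
    _ = ‖T‖ * Real.sqrt (∑ i, Complex.normSq (u i)) * Real.sqrt (∑ i, Complex.normSq (v i)) := by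
        rw [hnu, hnv]; ring

set_option maxHeartbeats 2000000 in
/-- Rank-one perturbation trace inequality: for `z ∈ ℂ⁺` with `ν = Im z`, an `n × n`
complex matrix `A`, a Hermitian `B`, `τ ∈ ℝ` and `q ∈ ℂⁿ`,
`|tr(((B - zI)⁻¹ - (B + τ q q* - zI)⁻¹) A)| ≤ ‖A‖ / ν`. -/
theorem rank_one_perturbation_trace (n : ℕ) (A B : Matrix (Fin n) (Fin n) ℂ)
    (hB : B.IsHermitian) (τ : ℝ) (q : Fin n → ℂ) (z : ℂ) (hz : 0 < z.im) :
    ‖(Matrix.trace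
          (((B - z • 1)⁻¹ -
              (B + (τ : ℂ) • Matrix.vecMulVec q (star q) - z • 1)⁻¹) * A))‖ ≤
      ‖(Matrix.toEuclideanCLM (𝕜 := ℂ) A :
          EuclideanSpace ℂ (Fin n) →L[ℂ] EuclideanSpace ℂ (Fin n))‖ / z.im := by
  have hν : z.im ≠ 0 := ne_of_gt hz
  set Q : Matrix (Fin n) (Fin n) ℂ := (τ : ℂ) • Matrix.vecMulVec q (star q) with hQ
  have hQH : Q.IsHermitian := by
    rw [Matrix.IsHermitian, hQ, Matrix.conjTranspose_smul]
    congr 1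
    · simp
    · ext i j
      simp [Matrix.conjTranspose_apply, Matrix.vecMulVec_apply, mul_comm]
  have hB' : (B + Q).IsHermitian := hB.add hQH
  have hU : IsUnit (B - z • 1) := isUnit_sub_smul hB hν
  have hU' : IsUnit (B + Q - z • 1) := isUnit_sub_smul hB' hν
  set R : Matrix (Fin n) (Fin n) ℂ := (B - z • 1)⁻¹ with hR
  set R' : Matrix (Fin n) (Fin n) ℂ := (B + Q - z • 1)⁻¹ with hR'
  have hdiff : R - R' = R * Q * R' := by
    rw [hR, hR', resolvent_sub hU hU', show (B + Q - z • 1) - (B - z • 1) = Q from by abel]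
  set a : ℂ := star q ⬝ᵥ (R *ᵥ q) with ha
  set b : ℂ := star q ⬝ᵥ (R' *ᵥ q) with hb
  set v : Fin n → ℂ := R *ᵥ q with hv
  set u : Fin n → ℂ := R'ᴴ *ᵥ q with hu
  set Sv : ℝ := ∑ i, Complex.normSq (v i) with hSv
  set Su : ℝ := ∑ i, Complex.normSq (u i) with hSu
  -- scalar identity a - b = τ a b
  have hab : a - b = (τ : ℂ) * a * b := by
    have h1 : star q ⬝ᵥ ((R - R') *ᵥ q) = a - b := by
      rw [Matrix.sub_mulVec, dotProduct_sub]
    have h2 : star q ⬝ᵥ ((R * Q * R') *ᵥ q) = (τ : ℂ) * a * b := by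
      rw [← Matrix.mulVec_mulVec, ← Matrix.mulVec_mulVec, hQ,
        Matrix.smul_mulVec, vecMulVec_mulVec', ← hb]
      rw [Matrix.mulVec_smul, Matrix.mulVec_smul, dotProduct_smul,
        dotProduct_smul, ← ha]
      simp [smul_eq_mul]
      ring
    rw [← h1, hdiff, h2]
  -- trace formula
  have htrace : ((R - R') * A).trace = (τ : ℂ) * (star u ⬝ᵥ (A *ᵥ v)) := by
    rw [hdiff, hQ]
    have e1 : R * ((τ : ℂ) • Matrix.vecMulVec q (star q)) * R' * A
        = (τ : ℂ) • (R * Matrix.vecMulVec q (star q) * R' * A) := by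
      rw [Matrix.mul_smul, Matrix.smul_mul, Matrix.smul_mul]
    rw [e1, Matrix.trace_smul, smul_eq_mul]
    congr 1
    have e2 : R * Matrix.vecMulVec q (star q) * R' * A
        = (R * Matrix.vecMulVec q (star q)) * (R' * A) := by
      simp only [mul_assoc]
    have e2' : R' * A * (R * Matrix.vecMulVec q (star q))
        = (R' * A * R) * Matrix.vecMulVec q (star q) := by
      simp only [mul_assoc]
    rw [e2, Matrix.trace_mul_comm, e2', Matrix.trace_mul_comm, trace_vecMulVec_mul]
    -- star q ⬝ᵥ ((R' * A * R) *ᵥ q) = star u ⬝ᵥ (A *ᵥ v)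
    have e3 : R' * A * R = R' * (A * R) := by simp only [mul_assoc]
    rw [e3, ← Matrix.mulVec_mulVec, Matrix.dotProduct_mulVec, hu, Matrix.star_mulVec,
      Matrix.conjTranspose_conjTranspose, ← Matrix.mulVec_mulVec, hv]
  -- Ward identities
  have hwa : a.im = z.im * Sv := ward hB hν q
  have hwb : b.im = z.im * Su := by
    have hzb : (star z).im ≠ 0 := by simpa using hν
    have h1 := ward hB' hzb q
    have h2 : R'ᴴ = (B + Q - star z • 1)⁻¹ := resolv_conjTranspose hB' z
    have h3 : star q ⬝ᵥ ((B + Q - star z • 1)⁻¹ *ᵥ q) = star b := by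
      rw [← h2, hb, dot_conjT]
    rw [h3] at h1
    have : (star b).im = -b.im := by simp
    rw [this] at h1
    have h4 : (star z).im = -z.im := by simp
    rw [h4] at h1
    have h5 : ∑ i, Complex.normSq (((B + Q - star z • 1)⁻¹ *ᵥ q) i) = Su := by
      rw [← h2, hSu, hu]
    rw [h5] at h1
    linarith
  have hSv0 : 0 ≤ Sv := Finset.sum_nonneg fun i _ => Complex.normSq_nonneg _
  have hSu0 : 0 ≤ Su := Finset.sum_nonneg fun i _ => Complex.normSq_nonneg _
  have haim : 0 ≤ a.im := by rw [hwa]; positivity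
  have hbim : 0 ≤ b.im := by rw [hwb]; positivity
  have hkey : τ ^ 2 * a.im * b.im ≤ 1 := scalar_key τ a b hab haim hbim
  -- |τ| √Su √Sv ≤ 1/ν
  have hprod : |τ| * Real.sqrt Su * Real.sqrt Sv ≤ 1 / z.im := by
    have hsq : (|τ| * Real.sqrt Su * Real.sqrt Sv) ^ 2 ≤ (1 / z.im) ^ 2 := by
      have e : (|τ| * Real.sqrt Su * Real.sqrt Sv) ^ 2 = τ ^ 2 * Su * Sv := by
        rw [mul_pow, mul_pow, sq_abs, Real.sq_sqrt hSu0, Real.sq_sqrt hSv0]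
      rw [e]
      rw [hwa, hwb] at hkey
      rw [div_pow, one_pow, le_div_iff₀ (by positivity)]
      calc τ ^ 2 * Su * Sv * z.im ^ 2 = τ ^ 2 * (z.im * Sv) * (z.im * Su) := by ring
        _ ≤ 1 := hkey
    have h0 : 0 ≤ |τ| * Real.sqrt Su * Real.sqrt Sv := by positivity
    have h1 : 0 ≤ 1 / z.im := by positivity
    nlinarith
  -- final assembly
  have hnorm0 : 0 ≤ ‖(Matrix.toEuclideanCLM (𝕜 := ℂ) A :
      EuclideanSpace ℂ (Fin n) →L[ℂ] EuclideanSpace ℂ (Fin n))‖ := norm_nonneg _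
  calc ‖((R - R') * A).trace‖
      = |τ| * ‖star u ⬝ᵥ (A *ᵥ v)‖ := by
        rw [htrace, norm_mul, Complex.norm_real, Real.norm_eq_abs]
    _ ≤ |τ| * (‖(Matrix.toEuclideanCLM (𝕜 := ℂ) A :
          EuclideanSpace ℂ (Fin n) →L[ℂ] EuclideanSpace ℂ (Fin n))‖ *
          Real.sqrt Su * Real.sqrt Sv) :=
        mul_le_mul_of_nonneg_left (cs_bound A u v) (abs_nonneg τ)
    _ = ‖(Matrix.toEuclideanCLM (𝕜 := ℂ) A :
          EuclideanSpace ℂ (Fin n) →L[ℂ] EuclideanSpace ℂ (Fin n))‖ *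
          (|τ| * Real.sqrt Su * Real.sqrt Sv) := by ring
    _ ≤ ‖(Matrix.toEuclideanCLM (𝕜 := ℂ) A :
          EuclideanSpace ℂ (Fin n) →L[ℂ] EuclideanSpace ℂ (Fin n))‖ * (1 / z.im) :=
        mul_le_mul_of_nonneg_left hprod hnorm0
    _ = ‖(Matrix.toEuclideanCLM (𝕜 := ℂ) A :
          EuclideanSpace ℂ (Fin n) →L[ℂ] EuclideanSpace ℂ (Fin n))‖ / z.im := by
        rw [mul_one_div]
end

section
/- Lévy distance bound for Hermitian matrices: if A and B are p×p Hermitian matrices, then the Lévy distance between their empirical spectral distributions satisfies L(F^A, F^B) ≤ ‖A − B‖, the operator norm of A − B. -/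
open Matrix

/-- Empirical spectral distribution of a Hermitian matrix:
`F^A(x) = (1/p) #{i : λ_i ≤ x}`. -/
noncomputable def esd {p : ℕ} {A : Matrix (Fin p) (Fin p) ℂ} (hA : A.IsHermitian)
    (x : ℝ) : ℝ :=
  (p : ℝ)⁻¹ * (Finset.univ.filter (fun i => hA.eigenvalues i ≤ x)).card

/-- The Lévy distance between two distribution functions. -/
noncomputable def levyDist (F G : ℝ → ℝ) : ℝ :=
  sInf {ε : ℝ | 0 < ε ∧ ∀ x : ℝ, F (x - ε) - ε ≤ G x ∧ G x ≤ F (x + ε) + ε}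

section LevyHelpers

open scoped InnerProductSpace

variable {p : ℕ}

lemma repr_eq_zero_of_mem_span (v : OrthonormalBasis (Fin p) ℂ (EuclideanSpace ℂ (Fin p)))
    (s : Finset (Fin p)) {u : EuclideanSpace ℂ (Fin p)}
    (hu : u ∈ Submodule.span ℂ (⇑v '' ↑s)) {i : Fin p} (hi : i ∉ s) :
    v.repr u i = 0 := by
  have h : ↑(v.toBasis.repr u).support ⊆ (↑s : Set (Fin p)) := by
    rw [← Module.Basis.mem_span_image]
    simpa [v.coe_toBasis] using hu
  have h2 : i ∉ (v.toBasis.repr u).support := fun h' => hi (by exact_mod_cast h h')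
  have h0 : v.toBasis.repr u i = 0 := Finsupp.notMem_support_iff.mp h2
  rwa [v.coe_toBasis_repr_apply] at h0

lemma norm_sq_eq_sum_repr (v : OrthonormalBasis (Fin p) ℂ (EuclideanSpace ℂ (Fin p)))
    (u : EuclideanSpace ℂ (Fin p)) :
    ‖u‖ ^ 2 = ∑ i, ‖v.repr u i‖ ^ 2 := by
  rw [← v.repr.norm_map u, EuclideanSpace.norm_eq]
  exact Real.sq_sqrt (by positivity)

lemma re_inner_eq_sum (v : OrthonormalBasis (Fin p) ℂ (EuclideanSpace ℂ (Fin p)))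
    (T : EuclideanSpace ℂ (Fin p) →L[ℂ] EuclideanSpace ℂ (Fin p)) (μ : Fin p → ℝ)
    (hT : ∀ i, T (v i) = (μ i : ℂ) • v i) (u : EuclideanSpace ℂ (Fin p)) :
    RCLike.re ⟪u, T u⟫_ℂ = ∑ i, μ i * ‖v.repr u i‖ ^ 2 := by
  classical
  have hrepr : ∀ j, v.repr (T u) j = (μ j : ℂ) * v.repr u j := by
    intro j
    have hTu : T u = ∑ i, (v.repr u i * (μ i : ℂ)) • v i := by
      conv_lhs => rw [← v.sum_repr u]
      rw [map_sum]
      refine Finset.sum_congr rfl fun i _ => ?_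
      rw [_root_.map_smul, hT i, smul_smul]
    rw [v.repr_apply_apply, hTu, v.orthonormal.inner_right_fintype]
    ring
  rw [← v.repr.inner_map_map u (T u), PiLp.inner_apply, map_sum]
  congr 1
  ext i
  rw [hrepr i]
  simp only [RCLike.inner_apply]
  rw [show (μ i : ℂ) * v.repr u i * (starRingEnd ℂ) (v.repr u i) =
      (μ i : ℂ) * ((starRingEnd ℂ) (v.repr u i) * v.repr u i) by ring]
  rw [RCLike.conj_mul]
  simp [← Complex.ofReal_pow]

lemma finrank_span_onb_image (v : OrthonormalBasis (Fin p) ℂ (EuclideanSpace ℂ (Fin p)))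
    (s : Finset (Fin p)) :
    Module.finrank ℂ ↥(Submodule.span ℂ (⇑v '' ↑s)) = s.card := by
  have li : LinearIndependent ℂ (fun i : ↥(↑s : Set (Fin p)) => v ↑i) :=
    v.orthonormal.linearIndependent.comp _ Subtype.val_injective
  rw [Set.image_eq_range, finrank_span_eq_card li]
  simp

lemma toEuclideanCLM_eigenvectorBasis {A : Matrix (Fin p) (Fin p) ℂ} (hA : A.IsHermitian)
    (i : Fin p) :
    toEuclideanCLM (𝕜 := ℂ) A (hA.eigenvectorBasis i) =
      (hA.eigenvalues i : ℂ) • hA.eigenvectorBasis i := by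
  refine (WithLp.equiv 2 (Fin p → ℂ)).injective ?_
  change A *ᵥ ⇑(hA.eigenvectorBasis i) = _
  exact hA.mulVec_eigenvectorBasis i

lemma card_eig_le {A B : Matrix (Fin p) (Fin p) ℂ}
    (hA : A.IsHermitian) (hB : B.IsHermitian) {ε x : ℝ}
    (hε : ‖(Matrix.toEuclideanCLM (𝕜 := ℂ) (A - B) :
        EuclideanSpace ℂ (Fin p) →L[ℂ] EuclideanSpace ℂ (Fin p))‖ < ε) :
    (Finset.univ.filter (fun i => hA.eigenvalues i ≤ x - ε)).card ≤
      (Finset.univ.filter (fun i => hB.eigenvalues i ≤ x)).card := by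
  classical
  by_contra hcon
  push_neg at hcon
  set v := hA.eigenvectorBasis with hv
  set w := hB.eigenvectorBasis with hw
  set s := Finset.univ.filter (fun i => hA.eigenvalues i ≤ x - ε) with hs
  set t := Finset.univ.filter (fun i => ¬ hB.eigenvalues i ≤ x) with ht
  have hcards : (Finset.univ.filter (fun i => hB.eigenvalues i ≤ x)).card + t.card = p := by
    rw [ht, Finset.card_filter_add_card_filter_not]
    simp
  have hst : p < s.card + t.card := by omega
  set SA := Submodule.span ℂ (⇑v '' ↑s) with hSA
  set TB := Submodule.span ℂ (⇑w '' ↑t) with hTB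
  have hdim : 0 < Module.finrank ℂ ↥(SA ⊓ TB) := by
    have h1 := Submodule.finrank_sup_add_finrank_inf_eq SA TB
    have h2 : Module.finrank ℂ ↥(SA ⊔ TB) ≤ p := by
      have := Submodule.finrank_le (SA ⊔ TB)
      rwa [finrank_euclideanSpace, Fintype.card_fin] at this
    have e1 : Module.finrank ℂ ↥SA = s.card := finrank_span_onb_image v s
    have e2 : Module.finrank ℂ ↥TB = t.card := finrank_span_onb_image w t
    omega
  have hne : SA ⊓ TB ≠ ⊥ := by
    intro hbot
    rw [hbot] at hdim
    simp at hdim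
  obtain ⟨u, hu, hu0⟩ := Submodule.exists_mem_ne_zero_of_ne_bot hne
  have huA : u ∈ SA := hu.1
  have huB : u ∈ TB := hu.2
  have hunorm : (0 : ℝ) < ‖u‖ ^ 2 := pow_pos (norm_pos_iff.mpr hu0) 2
  set TAop := (Matrix.toEuclideanCLM (𝕜 := ℂ) A :
      EuclideanSpace ℂ (Fin p) →L[ℂ] EuclideanSpace ℂ (Fin p)) with hTAop
  set TBop := (Matrix.toEuclideanCLM (𝕜 := ℂ) B :
      EuclideanSpace ℂ (Fin p) →L[ℂ] EuclideanSpace ℂ (Fin p)) with hTBop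
  -- A-quadratic form bound
  have hreA : RCLike.re ⟪u, TAop u⟫_ℂ ≤ (x - ε) * ‖u‖ ^ 2 := by
    rw [re_inner_eq_sum v TAop hA.eigenvalues (fun i => toEuclideanCLM_eigenvectorBasis hA i) u]
    have hvanish : ∀ i ∈ Finset.univ, i ∉ s → hA.eigenvalues i * ‖v.repr u i‖ ^ 2 = 0 := by
      intro i _ hi
      rw [repr_eq_zero_of_mem_span v s huA hi]
      simp
    rw [← Finset.sum_subset (Finset.subset_univ s) hvanish]
    have hnorm : ‖u‖ ^ 2 = ∑ i ∈ s, ‖v.repr u i‖ ^ 2 := by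
      rw [norm_sq_eq_sum_repr v u]
      refine (Finset.sum_subset (Finset.subset_univ s) ?_).symm
      intro i _ hi
      rw [repr_eq_zero_of_mem_span v s huA hi]
      simp
    rw [hnorm, Finset.mul_sum]
    refine Finset.sum_le_sum fun i hi => ?_
    have : hA.eigenvalues i ≤ x - ε := (Finset.mem_filter.mp hi).2
    exact mul_le_mul_of_nonneg_right this (by positivity)
  -- B-quadratic form bound (strict)
  have hreB : x * ‖u‖ ^ 2 < RCLike.re ⟪u, TBop u⟫_ℂ := by
    rw [re_inner_eq_sum w TBop hB.eigenvalues (fun i => toEuclideanCLM_eigenvectorBasis hB i) u]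
    have hvanish : ∀ i ∈ Finset.univ, i ∉ t → hB.eigenvalues i * ‖w.repr u i‖ ^ 2 = 0 := by
      intro i _ hi
      rw [repr_eq_zero_of_mem_span w t huB hi]
      simp
    rw [← Finset.sum_subset (Finset.subset_univ t) hvanish]
    have hnorm : ‖u‖ ^ 2 = ∑ i ∈ t, ‖w.repr u i‖ ^ 2 := by
      rw [norm_sq_eq_sum_repr w u]
      refine (Finset.sum_subset (Finset.subset_univ t) ?_).symm
      intro i _ hi
      rw [repr_eq_zero_of_mem_span w t huB hi]
      simp
    obtain ⟨j, hjt, hj0⟩ : ∃ j ∈ t, ‖w.repr u j‖ ^ 2 ≠ 0 := by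
      by_contra hall
      push_neg at hall
      have : ‖u‖ ^ 2 = 0 := by
        rw [hnorm]
        exact Finset.sum_eq_zero hall
      exact absurd this (ne_of_gt hunorm)
    rw [hnorm, Finset.mul_sum]
    refine Finset.sum_lt_sum (fun i hi => ?_) ⟨j, hjt, ?_⟩
    · have : x ≤ hB.eigenvalues i := le_of_lt (lt_of_not_ge (Finset.mem_filter.mp hi).2)
      exact mul_le_mul_of_nonneg_right this (by positivity)
    · have hx : x < hB.eigenvalues j := lt_of_not_ge (Finset.mem_filter.mp hjt).2
      have hpos : 0 < ‖w.repr u j‖ ^ 2 := lt_of_le_of_ne (by positivity) (Ne.symm hj0)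
      exact mul_lt_mul_of_pos_right hx hpos
  -- perturbation bound
  have hpert : RCLike.re ⟪u, TBop u⟫_ℂ - RCLike.re ⟪u, TAop u⟫_ℂ < ε * ‖u‖ ^ 2 := by
    have hD : TBop u - TAop u = -(Matrix.toEuclideanCLM (𝕜 := ℂ) (A - B)) u := by
      rw [hTAop, hTBop]
      simp [map_sub, sub_eq_neg_add]
    have hsplit : RCLike.re ⟪u, TBop u⟫_ℂ - RCLike.re ⟪u, TAop u⟫_ℂ =
        RCLike.re ⟪u, TBop u - TAop u⟫_ℂ := by
      rw [inner_sub_right, map_sub]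
    rw [hsplit, hD]
    calc RCLike.re ⟪u, -(Matrix.toEuclideanCLM (𝕜 := ℂ) (A - B)) u⟫_ℂ
        ≤ ‖⟪u, -(Matrix.toEuclideanCLM (𝕜 := ℂ) (A - B)) u⟫_ℂ‖ := RCLike.re_le_norm _
      _ ≤ ‖u‖ * ‖-(Matrix.toEuclideanCLM (𝕜 := ℂ) (A - B)) u‖ := norm_inner_le_norm _ _
      _ = ‖u‖ * ‖(Matrix.toEuclideanCLM (𝕜 := ℂ) (A - B)) u‖ := by rw [norm_neg]
      _ ≤ ‖u‖ * (‖(Matrix.toEuclideanCLM (𝕜 := ℂ) (A - B) :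
            EuclideanSpace ℂ (Fin p) →L[ℂ] EuclideanSpace ℂ (Fin p))‖ * ‖u‖) :=
          mul_le_mul_of_nonneg_left (ContinuousLinearMap.le_opNorm _ _) (norm_nonneg _)
      _ < ‖u‖ * (ε * ‖u‖) := by
          have h0 : (0 : ℝ) < ‖u‖ := norm_pos_iff.mpr hu0
          exact mul_lt_mul_of_pos_left (mul_lt_mul_of_pos_right hε h0) h0
      _ = ε * ‖u‖ ^ 2 := by ring
  linarith

end LevyHelpers

/-- Lévy distance bound for Hermitian matrices: `L(F^A, F^B) ≤ ‖A - B‖` (operator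
norm). -/
theorem levyDist_esd_le_opNorm (p : ℕ) (A B : Matrix (Fin p) (Fin p) ℂ)
    (hA : A.IsHermitian) (hB : B.IsHermitian) :
    levyDist (esd hA) (esd hB) ≤
      ‖(Matrix.toEuclideanCLM (𝕜 := ℂ) (A - B) :
          EuclideanSpace ℂ (Fin p) →L[ℂ] EuclideanSpace ℂ (Fin p))‖ := by
  set N := ‖(Matrix.toEuclideanCLM (𝕜 := ℂ) (A - B) :
      EuclideanSpace ℂ (Fin p) →L[ℂ] EuclideanSpace ℂ (Fin p))‖ with hN
  have hN0 : (0 : ℝ) ≤ N := norm_nonneg _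
  set S := {ε : ℝ | 0 < ε ∧ ∀ x : ℝ,
      esd hA (x - ε) - ε ≤ esd hB x ∧ esd hB x ≤ esd hA (x + ε) + ε} with hS
  have hmem : ∀ ε : ℝ, N < ε → ε ∈ S := by
    intro ε hε
    have hε0 : (0 : ℝ) < ε := lt_of_le_of_lt hN0 hε
    refine ⟨hε0, fun x => ⟨?_, ?_⟩⟩
    · have hc := card_eig_le hA hB (x := x) hε
      have hle : esd hA (x - ε) ≤ esd hB x := by
        unfold esd
        refine mul_le_mul_of_nonneg_left ?_ (by positivity)
        exact_mod_cast hc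
      linarith
    · have hε' : ‖(Matrix.toEuclideanCLM (𝕜 := ℂ) (B - A) :
          EuclideanSpace ℂ (Fin p) →L[ℂ] EuclideanSpace ℂ (Fin p))‖ < ε := by
        rw [show B - A = -(A - B) by abel, map_neg, norm_neg]
        exact hε
      have hc := card_eig_le hB hA (x := x + ε) hε'
      simp only [add_sub_cancel_right] at hc
      have hle : esd hB x ≤ esd hA (x + ε) := by
        unfold esd
        refine mul_le_mul_of_nonneg_left ?_ (by positivity)
        exact_mod_cast hc
      linarith
  have hbdd : BddBelow S := ⟨0, fun y hy => le_of_lt hy.1⟩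
  refine le_of_forall_pos_le_add fun δ hδ => ?_
  exact csInf_le hbdd (hmem (N + δ) (by linarith))
end

section
/- Lévy distance estimate via Frobenius norms: for p×n complex matrices A and B, L(F^{AA*}, F^{BB*})^4 ≤ (2/p²) tr((A−B)(A−B)*) · tr(AA* + BB*). -/
open Matrix

open Polynomial

set_option linter.unusedSectionVars false
set_option maxHeartbeats 1000000




variable {ι κ : Type*} [Fintype ι] [Fintype κ] [DecidableEq ι]

example (a : ℝ) : (RCLike.ofReal a : ℂ) = Complex.ofReal a := rfl

lemma trace_mul_conjTranspose_re (M : Matrix ι κ ℂ) :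
    (trace (M * Mᴴ)).re = ∑ k, ∑ l, Complex.normSq (M k l) := by
  simp only [trace, diag, mul_apply, conjTranspose_apply]
  rw [Complex.re_sum]
  refine Finset.sum_congr rfl fun k _ => ?_
  rw [Complex.re_sum]
  refine Finset.sum_congr rfl fun l _ => ?_
  rw [Complex.star_def, Complex.mul_conj, Complex.ofReal_re]

lemma trace_mul_conjTranspose_re_nonneg (M : Matrix ι κ ℂ) :
    0 ≤ (trace (M * Mᴴ)).re := by
  rw [trace_mul_conjTranspose_re]
  exact Finset.sum_nonneg fun k _ => Finset.sum_nonneg fun l _ => Complex.normSq_nonneg _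

lemma row_sum_normSq {W : Matrix ι ι ℂ} (h : W * star W = 1) (k : ι) :
    ∑ l, Complex.normSq (W k l) = 1 := by
  have h2 := congrArg (fun M : Matrix ι ι ℂ => (M k k).re) h
  simp only [mul_apply, Matrix.star_apply, one_apply_eq] at h2
  rw [Complex.re_sum] at h2
  simp only [Complex.star_def, Complex.mul_conj, Complex.ofReal_re] at h2
  simpa using h2

lemma col_sum_normSq {W : Matrix ι ι ℂ} (h : star W * W = 1) (l : ι) :
    ∑ k, Complex.normSq (W k l) = 1 := by
  have h2 := congrArg (fun M : Matrix ι ι ℂ => (M l l).re) h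
  simp only [mul_apply, Matrix.star_apply, one_apply_eq] at h2
  rw [Complex.re_sum] at h2
  simp only [mul_comm, Complex.star_def, Complex.mul_conj, Complex.ofReal_re] at h2
  simpa using h2

lemma trace_unitary_conj {U : Matrix ι ι ℂ} (hU : star U * U = 1) (X : Matrix ι ι ℂ) :
    trace (U * X * star U) = trace X := by
  rw [trace_mul_cycle, hU, Matrix.one_mul]


section coupling
variable {H K : Matrix ι ι ℂ} (hH : H.IsHermitian) (hK : K.IsHermitian)

noncomputable def cW (hH : H.IsHermitian) (hK : K.IsHermitian) : Matrix ι ι ℂ :=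
  star (hH.eigenvectorUnitary : Matrix ι ι ℂ) * (hK.eigenvectorUnitary : Matrix ι ι ℂ)

lemma cW_mem : cW hH hK ∈ Matrix.unitaryGroup ι ℂ :=
  mul_mem (Unitary.star_mem (hH.eigenvectorUnitary).2) (hK.eigenvectorUnitary).2

lemma cW_mul_star : cW hH hK * star (cW hH hK) = 1 :=
  (Matrix.mem_unitaryGroup_iff).mp (cW_mem hH hK)

lemma star_mul_cW : star (cW hH hK) * cW hH hK = 1 :=
  (Matrix.mem_unitaryGroup_iff').mp (cW_mem hH hK)

lemma cW_entry_eq :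
    ∀ k l, (star (hH.eigenvectorUnitary : Matrix ι ι ℂ) * (H - K)
        * (hK.eigenvectorUnitary : Matrix ι ι ℂ)) k l
      = ((hH.eigenvalues k : ℂ) - (hK.eigenvalues l : ℂ)) * cW hH hK k l := by
  intro k l
  set U : Matrix ι ι ℂ := (hH.eigenvectorUnitary : Matrix ι ι ℂ) with hU
  set V : Matrix ι ι ℂ := (hK.eigenvectorUnitary : Matrix ι ι ℂ) with hV
  have hUU' : U * star U = 1 := (Matrix.mem_unitaryGroup_iff).mp (hH.eigenvectorUnitary).2
  have hVV' : V * star V = 1 := (Matrix.mem_unitaryGroup_iff).mp (hK.eigenvectorUnitary).2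
  have hcancelU : ∀ X : Matrix ι ι ℂ, U * (star U * X) = X := fun X => by
    rw [← Matrix.mul_assoc, hUU', Matrix.one_mul]
  have e1 : star U * H * V = diagonal (RCLike.ofReal ∘ hH.eigenvalues) * cW hH hK := by
    calc star U * H * V = star U * H * (U * (star U * V)) := by rw [hcancelU]
      _ = (star U * H * U) * (star U * V) := by simp only [Matrix.mul_assoc]
      _ = diagonal (RCLike.ofReal ∘ hH.eigenvalues) * cW hH hK := by
          have hd := hH.conjStarAlgAut_star_eigenvectorUnitary
          rw [Unitary.conjStarAlgAut_star_apply] at hd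
          rw [hU, hd]; rfl
  have e2 : star U * K * V = cW hH hK * diagonal (RCLike.ofReal ∘ hK.eigenvalues) := by
    calc star U * K * V = (star U * (V * star V)) * K * V := by rw [hVV', Matrix.mul_one]
      _ = (star U * V) * (star V * K * V) := by simp only [Matrix.mul_assoc]
      _ = cW hH hK * diagonal (RCLike.ofReal ∘ hK.eigenvalues) := by
          have hd := hK.conjStarAlgAut_star_eigenvectorUnitary
          rw [Unitary.conjStarAlgAut_star_apply] at hd
          rw [hV, hd]; rfl
  have hdec : star U * (H - K) * V
      = diagonal (RCLike.ofReal ∘ hH.eigenvalues) * cW hH hK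
        - cW hH hK * diagonal (RCLike.ofReal ∘ hK.eigenvalues) := by
    rw [Matrix.mul_sub, Matrix.sub_mul, e1, e2]
  rw [hdec]
  simp only [Matrix.sub_apply, diagonal_mul, mul_diagonal, Function.comp_apply]
  have r1 : (RCLike.ofReal (hH.eigenvalues k) : ℂ) = ((hH.eigenvalues k : ℝ) : ℂ) := rfl
  have r2 : (RCLike.ofReal (hK.eigenvalues l) : ℂ) = ((hK.eigenvalues l : ℝ) : ℂ) := rfl
  rw [r1, r2]
  ring

lemma coupling_identity :
    ∑ k, ∑ l, (hH.eigenvalues k - hK.eigenvalues l) ^ 2 * Complex.normSq (cW hH hK k l)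
      = (trace ((H - K) * (H - K)ᴴ)).re := by
  set U : Matrix ι ι ℂ := (hH.eigenvectorUnitary : Matrix ι ι ℂ) with hU
  set V : Matrix ι ι ℂ := (hK.eigenvectorUnitary : Matrix ι ι ℂ) with hV
  have hUU : star U * U = 1 := (Matrix.mem_unitaryGroup_iff').mp (hH.eigenvectorUnitary).2
  have hUU' : U * star U = 1 := (Matrix.mem_unitaryGroup_iff).mp (hH.eigenvectorUnitary).2
  have hVV' : V * star V = 1 := (Matrix.mem_unitaryGroup_iff).mp (hK.eigenvectorUnitary).2
  set M : Matrix ι ι ℂ := star U * (H - K) * V with hM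
  have tr_eq : trace (M * Mᴴ) = trace ((H - K) * (H - K)ᴴ) := by
    have hMstar : Mᴴ = star V * ((H - K)ᴴ * U) := by
      rw [hM]
      simp only [conjTranspose_mul, conjTranspose_conjTranspose, star_eq_conjTranspose,
        Matrix.mul_assoc]
    have key : M * Mᴴ = star U * ((H - K) * (H - K)ᴴ) * U := by
      rw [hMstar, hM]
      have hcancelV : ∀ X : Matrix ι ι ℂ, V * (star V * X) = X := fun X => by
        rw [← Matrix.mul_assoc, hVV', Matrix.one_mul]
      simp only [Matrix.mul_assoc, hcancelV]
    rw [key]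
    have : star U * ((H - K) * (H - K)ᴴ) * U
        = star U * ((H - K) * (H - K)ᴴ) * star (star U) := by rw [star_star]
    rw [this, trace_unitary_conj (by rw [star_star]; exact hUU')]
  rw [← tr_eq, trace_mul_conjTranspose_re]
  refine Finset.sum_congr rfl fun k _ => Finset.sum_congr rfl fun l _ => ?_
  rw [hM, cW_entry_eq hH hK k l, Complex.normSq_mul]
  congr 1
  rw [← Complex.ofReal_sub, Complex.normSq_ofReal, sq]

lemma sum_sq_eigenvalues : ∑ k, hH.eigenvalues k ^ 2 = (trace (H * H)).re := by
  set U : Matrix ι ι ℂ := (hH.eigenvectorUnitary : Matrix ι ι ℂ) with hU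
  have hUU : star U * U = 1 := (Matrix.mem_unitaryGroup_iff').mp (hH.eigenvectorUnitary).2
  have hUU' : U * star U = 1 := (Matrix.mem_unitaryGroup_iff).mp (hH.eigenvectorUnitary).2
  set D : Matrix ι ι ℂ := diagonal (RCLike.ofReal ∘ hH.eigenvalues) with hD
  have hdec : H = U * D * star U := hH.spectral_theorem
  have key : H * H = U * (D * D) * star U := by
    nth_rewrite 1 [hdec]
    nth_rewrite 1 [hdec]
    have hcancelU : ∀ X : Matrix ι ι ℂ, star U * (U * X) = X := fun X => by
      rw [← Matrix.mul_assoc, hUU, Matrix.one_mul]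
    simp only [Matrix.mul_assoc, hcancelU]
  rw [key, trace_unitary_conj hUU, hD, diagonal_mul_diagonal, trace_diagonal, Complex.re_sum]
  refine Finset.sum_congr rfl fun k _ => ?_
  simp only [Function.comp_apply]
  rw [show ((RCLike.ofReal (hH.eigenvalues k) : ℂ)) = ((hH.eigenvalues k : ℝ) : ℂ) from rfl,
    ← Complex.ofReal_mul, Complex.ofReal_re, sq]

end coupling


/-- Hermitian dilation of a rectangular matrix. -/
def dil {p n : ℕ} (A : Matrix (Fin p) (Fin n) ℂ) :
    Matrix (Fin p ⊕ Fin n) (Fin p ⊕ Fin n) ℂ :=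
  fromBlocks 0 A Aᴴ 0

lemma dil_isHermitian {p n : ℕ} (A : Matrix (Fin p) (Fin n) ℂ) : (dil A).IsHermitian := by
  unfold Matrix.IsHermitian dil
  rw [fromBlocks_conjTranspose]
  simp

lemma dil_sub {p n : ℕ} (A B : Matrix (Fin p) (Fin n) ℂ) : dil A - dil B = dil (A - B) := by
  unfold dil
  ext (i | i) (j | j) <;> simp [fromBlocks]

lemma trace_dil_mul_dil {p n : ℕ} (A : Matrix (Fin p) (Fin n) ℂ) :
    trace (dil A * dil A) = 2 * trace (A * Aᴴ) := by
  unfold dil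
  rw [fromBlocks_multiply]
  simp only [Matrix.mul_zero, Matrix.zero_mul, add_zero, zero_add]
  have hb : trace (fromBlocks (A * Aᴴ) 0 0 (Aᴴ * A)) = trace (A * Aᴴ) + trace (Aᴴ * A) := by
    simp [Matrix.trace, Matrix.diag, Fintype.sum_sum_type]
  rw [hb, trace_mul_comm Aᴴ A]
  ring

lemma det_smul_one_sub_dil {p n : ℕ} (A : Matrix (Fin p) (Fin n) ℂ) {z : ℂ} (hz : z ≠ 0) :
    det (z • (1 : Matrix (Fin p ⊕ Fin n) (Fin p ⊕ Fin n) ℂ) - dil A) * z ^ p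
      = det (z ^ 2 • (1 : Matrix (Fin p) (Fin p) ℂ) - A * Aᴴ) * z ^ n := by
  have hblock : z • (1 : Matrix (Fin p ⊕ Fin n) (Fin p ⊕ Fin n) ℂ) - dil A
      = fromBlocks (z • 1) (-A) (-Aᴴ) (z • 1) := by
    unfold dil
    ext (i | i) (j | j) <;>
      simp [fromBlocks, Matrix.one_apply, Matrix.smul_apply, Matrix.sub_apply]
  letI : Invertible (z • (1 : Matrix (Fin n) (Fin n) ℂ)) :=
    ⟨z⁻¹ • 1, by rw [smul_mul_smul_comm, inv_mul_cancel₀ hz, Matrix.one_mul, one_smul],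
      by rw [smul_mul_smul_comm, mul_inv_cancel₀ hz, Matrix.one_mul, one_smul]⟩
  rw [hblock, Matrix.det_fromBlocks₂₂]
  have hinv : (⅟ (z • (1 : Matrix (Fin n) (Fin n) ℂ))) = z⁻¹ • 1 := rfl
  rw [hinv]
  have h1 : (-A) * (z⁻¹ • (1 : Matrix (Fin n) (Fin n) ℂ)) * (-Aᴴ) = z⁻¹ • (A * Aᴴ) := by
    rw [Matrix.mul_smul, Matrix.mul_one, Matrix.smul_mul, Matrix.neg_mul, Matrix.mul_neg,
      neg_neg]
  rw [h1]
  have h2 : det (z • (1 : Matrix (Fin n) (Fin n) ℂ)) = z ^ n := by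
    rw [det_smul, det_one, mul_one, Fintype.card_fin]
  rw [h2]
  have e : z • (z • (1 : Matrix (Fin p) (Fin p) ℂ) - z⁻¹ • (A * Aᴴ))
      = z ^ 2 • (1 : Matrix (Fin p) (Fin p) ℂ) - A * Aᴴ := by
    rw [smul_sub, smul_smul, smul_smul, mul_inv_cancel₀ hz, one_smul, ← sq]
  have h3 : det (z ^ 2 • (1 : Matrix (Fin p) (Fin p) ℂ) - A * Aᴴ)
      = z ^ p * det (z • (1 : Matrix (Fin p) (Fin p) ℂ) - z⁻¹ • (A * Aᴴ)) := by
    rw [← e, det_smul, Fintype.card_fin]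
  rw [h3]
  ring

lemma countP_replicate' {α : Type*} (pred : α → Prop) [DecidablePred pred] (a : α) (m : ℕ)
    (h : pred a) : Multiset.countP pred (Multiset.replicate m a) = m := by
  induction m with
  | zero => simp
  | succ m ih => rw [Multiset.replicate_succ, Multiset.countP_cons_of_pos _ h, ih]

lemma det_smul_one_sub_hermitian {ι : Type*} [Fintype ι] [DecidableEq ι]
    {M : Matrix ι ι ℂ} (hM : M.IsHermitian) (z : ℂ) :
    det (z • (1 : Matrix ι ι ℂ) - M) = ∏ k, (z - (hM.eigenvalues k : ℂ)) := by
  set U : Matrix ι ι ℂ := (hM.eigenvectorUnitary : Matrix ι ι ℂ) with hU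
  have hUU : star U * U = 1 := (Matrix.mem_unitaryGroup_iff').mp (hM.eigenvectorUnitary).2
  have hUU' : U * star U = 1 := (Matrix.mem_unitaryGroup_iff).mp (hM.eigenvectorUnitary).2
  set D : Matrix ι ι ℂ := diagonal (RCLike.ofReal ∘ hM.eigenvalues) with hD
  have key : z • (1 : Matrix ι ι ℂ) - M = U * (z • 1 - D) * star U := by
    rw [Matrix.mul_sub, Matrix.sub_mul]
    congr 1
    · rw [Matrix.mul_smul, Matrix.mul_one, Matrix.smul_mul, hUU']
    · exact hM.spectral_theorem
  rw [key, det_mul, det_mul, mul_comm, ← mul_assoc, ← det_mul, hUU, det_one, one_mul]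
  have : z • (1 : Matrix ι ι ℂ) - D = diagonal (fun k => z - (hM.eigenvalues k : ℂ)) := by
    rw [hD, smul_one_eq_diagonal, diagonal_sub]
    rfl
  rw [this, det_diagonal]

lemma dil_poly_eq {p n : ℕ} (A : Matrix (Fin p) (Fin n) ℂ) :
    (∏ k, (X - C (((dil_isHermitian A).eigenvalues k : ℝ) : ℂ))) * X ^ p
      = (∏ i, ((X - C ((Real.sqrt ((isHermitian_mul_conjTranspose_self A).eigenvalues i) : ℝ) : ℂ))
          * (X - C ((-Real.sqrt ((isHermitian_mul_conjTranspose_self A).eigenvalues i) : ℝ) : ℂ))))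
        * X ^ n := by
  set lam := (isHermitian_mul_conjTranspose_self A).eigenvalues with hlam
  set alf := (dil_isHermitian A).eigenvalues with half
  apply Polynomial.eq_of_infinite_eval_eq
  apply Set.Infinite.mono (s := {(0 : ℂ)}ᶜ) ?_ ((Set.finite_singleton 0).infinite_compl)
  intro z hz
  simp only [Set.mem_compl_iff, Set.mem_singleton_iff] at hz
  simp only [Set.mem_setOf_eq, eval_mul, eval_pow, eval_prod, eval_sub, eval_X, eval_C]
  have hdet1 : ∏ k, (z - (alf k : ℂ)) = det (z • (1 : Matrix (Fin p ⊕ Fin n) (Fin p ⊕ Fin n) ℂ)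
      - dil A) := (det_smul_one_sub_hermitian (dil_isHermitian A) z).symm
  have hdet2 : ∏ i, ((z : ℂ) ^ 2 - (lam i : ℂ)) = det ((z ^ 2) • (1 : Matrix (Fin p) (Fin p) ℂ)
      - A * Aᴴ) := (det_smul_one_sub_hermitian (isHermitian_mul_conjTranspose_self A) (z ^ 2)).symm
  have hfac : ∀ i, (z - ((Real.sqrt (lam i) : ℝ) : ℂ)) * (z - ((-Real.sqrt (lam i) : ℝ) : ℂ))
      = z ^ 2 - (lam i : ℂ) := by
    intro i
    have h1 : ((Real.sqrt (lam i) : ℝ) : ℂ) ^ 2 = (lam i : ℂ) := by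
      rw [← Complex.ofReal_pow, Real.sq_sqrt (eigenvalues_self_mul_conjTranspose_nonneg A i)]
    push_cast
    linear_combination -h1
  calc (∏ k, (z - (alf k : ℂ))) * z ^ p
      = det (z • (1 : Matrix (Fin p ⊕ Fin n) (Fin p ⊕ Fin n) ℂ) - dil A) * z ^ p := by
        rw [hdet1]
    _ = det ((z ^ 2) • (1 : Matrix (Fin p) (Fin p) ℂ) - A * Aᴴ) * z ^ n := by
        exact det_smul_one_sub_dil A hz
    _ = (∏ i, (z ^ 2 - (lam i : ℂ))) * z ^ n := by rw [hdet2]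
    _ = (∏ i, ((z - ((Real.sqrt (lam i) : ℝ) : ℂ)) * (z - ((-Real.sqrt (lam i) : ℝ) : ℂ)))) * z ^ n := by
        rw [Finset.prod_congr rfl fun i _ => (hfac i).symm]

lemma dil_multiset_eq {p n : ℕ} (A : Matrix (Fin p) (Fin n) ℂ) :
    (Finset.univ.val.map fun k => (((dil_isHermitian A).eigenvalues k : ℝ) : ℂ))
        + Multiset.replicate p (0 : ℂ)
      = ((Finset.univ.val.map fun i =>
            ((Real.sqrt ((isHermitian_mul_conjTranspose_self A).eigenvalues i) : ℝ) : ℂ))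
          + (Finset.univ.val.map fun i =>
            ((-Real.sqrt ((isHermitian_mul_conjTranspose_self A).eigenvalues i) : ℝ) : ℂ)))
        + Multiset.replicate n (0 : ℂ) := by
  set f : Multiset ℂ → Polynomial ℂ := fun s => (s.map fun a => X - C a).prod with hf
  have hprod : ∀ s t : Multiset ℂ, f (s + t) = f s * f t := fun s t => by
    rw [hf]; simp only [Multiset.map_add, Multiset.prod_add]
  have hmapf : ∀ {κ : Type} [Fintype κ] (g : κ → ℂ),
      f (Finset.univ.val.map g) = ∏ k, (X - C (g k)) := by
    intro κ _ g
    rw [hf]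
    simp only [Multiset.map_map, Function.comp]
    rw [Finset.prod_eq_multiset_prod]
  have hrep : ∀ m : ℕ, f (Multiset.replicate m 0) = X ^ m := fun m => by
    rw [hf]
    simp only [Multiset.map_replicate, map_zero, sub_zero, Multiset.prod_replicate]
  have key : f ((Finset.univ.val.map fun k => (((dil_isHermitian A).eigenvalues k : ℝ) : ℂ))
        + Multiset.replicate p (0 : ℂ))
      = f (((Finset.univ.val.map fun i =>
            ((Real.sqrt ((isHermitian_mul_conjTranspose_self A).eigenvalues i) : ℝ) : ℂ))
          + (Finset.univ.val.map fun i =>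
            ((-Real.sqrt ((isHermitian_mul_conjTranspose_self A).eigenvalues i) : ℝ) : ℂ)))
        + Multiset.replicate n (0 : ℂ)) := by
    rw [hprod, hprod, hprod, hmapf, hmapf, hmapf, hrep, hrep]
    rw [dil_poly_eq A, ← Finset.prod_mul_distrib]
  have := congrArg Polynomial.roots key
  rwa [hf, Polynomial.roots_multiset_prod_X_sub_C, Polynomial.roots_multiset_prod_X_sub_C]
    at this

lemma dil_count {p n : ℕ} (A : Matrix (Fin p) (Fin n) ℂ) (x : ℝ) (hx : 0 ≤ x) :
    (Finset.univ.filter fun k => ((dil_isHermitian A).eigenvalues k) ^ 2 ≤ x).card + p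
      = 2 * (Finset.univ.filter
          fun i => (isHermitian_mul_conjTranspose_self A).eigenvalues i ≤ x).card + n := by
  classical
  have hc := congrArg (Multiset.countP fun z : ℂ => Complex.normSq z ≤ x) (dil_multiset_eq A)
  simp only [Multiset.countP_add] at hc
  rw [Multiset.countP_map, Multiset.countP_map, Multiset.countP_map,
    countP_replicate' _ _ _ (by simpa using hx), countP_replicate' _ _ _ (by simpa using hx)]
    at hc
  have e1 : (Multiset.filter
        (fun k => Complex.normSq (((dil_isHermitian A).eigenvalues k : ℝ) : ℂ) ≤ x)
        Finset.univ.val).card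
      = (Finset.univ.filter fun k => ((dil_isHermitian A).eigenvalues k) ^ 2 ≤ x).card := by
    rw [Finset.card_def, Finset.filter_val]
    congr 1
    apply Multiset.filter_congr
    intro k _
    rw [Complex.normSq_ofReal, ← sq]
  have e2 : (Multiset.filter
        (fun i => Complex.normSq
          ((Real.sqrt ((isHermitian_mul_conjTranspose_self A).eigenvalues i) : ℝ) : ℂ) ≤ x)
        Finset.univ.val).card
      = (Finset.univ.filter
          fun i => (isHermitian_mul_conjTranspose_self A).eigenvalues i ≤ x).card := by
    rw [Finset.card_def, Finset.filter_val]
    congr 1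
    apply Multiset.filter_congr
    intro i _
    rw [Complex.normSq_ofReal,
      Real.mul_self_sqrt (eigenvalues_self_mul_conjTranspose_nonneg A i)]
  have e3 : (Multiset.filter
        (fun i => Complex.normSq
          ((-Real.sqrt ((isHermitian_mul_conjTranspose_self A).eigenvalues i) : ℝ) : ℂ) ≤ x)
        Finset.univ.val).card
      = (Finset.univ.filter
          fun i => (isHermitian_mul_conjTranspose_self A).eigenvalues i ≤ x).card := by
    rw [Finset.card_def, Finset.filter_val]
    congr 1
    apply Multiset.filter_congr
    intro i _
    rw [Complex.normSq_ofReal, neg_mul_neg,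
      Real.mul_self_sqrt (eigenvalues_self_mul_conjTranspose_nonneg A i)]
  rw [e1, e2, e3] at hc
  omega


lemma count_le {ι : Type*} [Fintype ι] [DecidableEq ι] (Q : ι → ι → ℝ)
    (hQ0 : ∀ k l, 0 ≤ Q k l) (hrow : ∀ k, ∑ l, Q k l = 1) (hcol : ∀ l, ∑ k, Q k l = 1)
    (a b : ι → ℝ) {ε : ℝ} (hε : 0 < ε) (S T : Finset ι)
    (hgap : ∀ k ∈ S, ∀ l ∉ T, ε ≤ |a k - b l|) :
    (S.card : ℝ) ≤ T.card + (∑ k, ∑ l, |a k - b l| * Q k l) / ε := by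
  have h1 : (S.card : ℝ) = ∑ k ∈ S, ∑ l, Q k l := by
    simp [hrow]
  have hsplit : ∀ k, ∑ l, Q k l = ∑ l ∈ T, Q k l + ∑ l ∈ Tᶜ, Q k l :=
    fun k => (Finset.sum_add_sum_compl T _).symm
  have h2 : (S.card : ℝ) = ∑ k ∈ S, ∑ l ∈ T, Q k l + ∑ k ∈ S, ∑ l ∈ Tᶜ, Q k l := by
    rw [h1, ← Finset.sum_add_distrib]
    exact Finset.sum_congr rfl fun k _ => hsplit k
  have h3 : ∑ k ∈ S, ∑ l ∈ T, Q k l ≤ (T.card : ℝ) := by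
    calc ∑ k ∈ S, ∑ l ∈ T, Q k l ≤ ∑ k, ∑ l ∈ T, Q k l := by
          apply Finset.sum_le_sum_of_subset_of_nonneg (Finset.subset_univ S)
          intro k _ _
          exact Finset.sum_nonneg fun l _ => hQ0 k l
      _ = ∑ l ∈ T, ∑ k, Q k l := Finset.sum_comm
      _ = (T.card : ℝ) := by simp [hcol]
  have h4 : ∑ k ∈ S, ∑ l ∈ Tᶜ, Q k l ≤ (∑ k, ∑ l, |a k - b l| * Q k l) / ε := by
    rw [le_div_iff₀ hε, Finset.sum_mul]
    have step : ∀ k ∈ S, (∑ l ∈ Tᶜ, Q k l) * ε ≤ ∑ l, |a k - b l| * Q k l := by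
      intro k hk
      rw [Finset.sum_mul]
      calc ∑ l ∈ Tᶜ, Q k l * ε ≤ ∑ l ∈ Tᶜ, |a k - b l| * Q k l := by
            apply Finset.sum_le_sum
            intro l hl
            rw [mul_comm (Q k l) ε]
            exact mul_le_mul_of_nonneg_right
              (hgap k hk l (by simpa [Finset.mem_compl] using hl)) (hQ0 k l)
        _ ≤ ∑ l, |a k - b l| * Q k l := by
            apply Finset.sum_le_sum_of_subset_of_nonneg (Finset.subset_univ _)
            intro l _ _
            exact mul_nonneg (abs_nonneg _) (hQ0 k l)
    calc ∑ k ∈ S, (∑ l ∈ Tᶜ, Q k l) * ε ≤ ∑ k ∈ S, ∑ l, |a k - b l| * Q k l :=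
          Finset.sum_le_sum step
      _ ≤ ∑ k, ∑ l, |a k - b l| * Q k l := by
          apply Finset.sum_le_sum_of_subset_of_nonneg (Finset.subset_univ _)
          intro k _ _
          exact Finset.sum_nonneg fun l _ => mul_nonneg (abs_nonneg _) (hQ0 k l)
  linarith



/-- Lévy distance estimate via Frobenius norms: for `p × n` complex matrices `A, B`,
`L(F^{AA*}, F^{BB*})⁴ ≤ (2/p²) tr((A-B)(A-B)*) · tr(AA* + BB*)`. -/
theorem levyDist_esd_pow_four_le (p n : ℕ) (A B : Matrix (Fin p) (Fin n) ℂ) :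
    levyDist (esd (Matrix.isHermitian_mul_conjTranspose_self A))
        (esd (Matrix.isHermitian_mul_conjTranspose_self B)) ^ 4 ≤
      2 / (p : ℝ) ^ 2 * (Matrix.trace ((A - B) * (A - B)ᴴ)).re *
        (Matrix.trace (A * Aᴴ + B * Bᴴ)).re := by
  classical
  set F : ℝ → ℝ := esd (Matrix.isHermitian_mul_conjTranspose_self A) with hF
  set G : ℝ → ℝ := esd (Matrix.isHermitian_mul_conjTranspose_self B) with hG
  set SS : Set ℝ := {ε : ℝ | 0 < ε ∧ ∀ x : ℝ, F (x - ε) - ε ≤ G x ∧ G x ≤ F (x + ε) + ε}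
    with hSS
  have hLD : levyDist F G = sInf SS := rfl
  set trD : ℝ := (Matrix.trace ((A - B) * (A - B)ᴴ)).re with htrD
  set trS : ℝ := (Matrix.trace (A * Aᴴ + B * Bᴴ)).re with htrS
  have htrD0 : 0 ≤ trD := trace_mul_conjTranspose_re_nonneg (A - B)
  have htrS_split : trS = (Matrix.trace (A * Aᴴ)).re + (Matrix.trace (B * Bᴴ)).re := by
    rw [htrS, trace_add, Complex.add_re]
  have htrS0 : 0 ≤ trS := by
    rw [htrS_split]
    have := trace_mul_conjTranspose_re_nonneg A
    have := trace_mul_conjTranspose_re_nonneg B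
    linarith
  have hFnonneg : ∀ y, 0 ≤ F y := fun y =>
    mul_nonneg (inv_nonneg.mpr (Nat.cast_nonneg p)) (Nat.cast_nonneg _)
  have hGnonneg : ∀ y, 0 ≤ G y := fun y =>
    mul_nonneg (inv_nonneg.mpr (Nat.cast_nonneg p)) (Nat.cast_nonneg _)
  rcases Nat.eq_zero_or_pos p with hp | hp
  · -- degenerate case p = 0
    subst hp
    have hF0 : ∀ y, F y = 0 := fun y => by
      rw [hF]
      simp [esd]
    have hG0 : ∀ y, G y = 0 := fun y => by
      rw [hG]
      simp [esd]
    have hSSeq : SS = Set.Ioi (0 : ℝ) := by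
      ext ε
      simp only [hSS, Set.mem_setOf_eq, Set.mem_Ioi]
      constructor
      · exact fun h => h.1
      · intro h
        refine ⟨h, fun x => ?_⟩
        simp only [hF0, hG0]
        constructor
        · linarith
        · linarith
    rw [hLD, hSSeq, csInf_Ioi]
    norm_num
  · -- main case p > 0
    have hpR : (0 : ℝ) < p := by exact_mod_cast hp
    set hH := dil_isHermitian A with hhH
    set hK := dil_isHermitian B with hhK
    set al : Fin p ⊕ Fin n → ℝ := hH.eigenvalues with hal
    set be : Fin p ⊕ Fin n → ℝ := hK.eigenvalues with hbe
    set Q : (Fin p ⊕ Fin n) → (Fin p ⊕ Fin n) → ℝ :=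
      fun k l => Complex.normSq (cW hH hK k l) with hQ
    have hQ0 : ∀ k l, 0 ≤ Q k l := fun k l => Complex.normSq_nonneg _
    have hrow : ∀ k, ∑ l, Q k l = 1 := fun k => row_sum_normSq (cW_mul_star hH hK) k
    have hcol : ∀ l, ∑ k, Q k l = 1 := fun l => col_sum_normSq (star_mul_cW hH hK) l
    set E : ℝ := ∑ k, ∑ l, |al k ^ 2 - be l ^ 2| * Q k l with hE
    have hE0 : 0 ≤ E :=
      Finset.sum_nonneg fun k _ => Finset.sum_nonneg fun l _ =>
        mul_nonneg (abs_nonneg _) (hQ0 k l)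
    -- F1 : sum of (al - be)^2 * Q = 2 * trD
    have F1 : ∑ k, ∑ l, (al k - be l) ^ 2 * Q k l = 2 * trD := by
      rw [hal, hbe, hQ]
      rw [coupling_identity hH hK]
      have h1 : dil A - dil B = dil (A - B) := dil_sub A B
      have h2 : (dil A - dil B)ᴴ = dil A - dil B := by
        rw [h1]; exact (dil_isHermitian (A - B))
      rw [h2, h1, trace_dil_mul_dil (A - B)]
      simp [Complex.mul_re, htrD]
    -- F2 : sum of (al + be)^2 * Q ≤ 4 * trS
    have F2a : ∑ k, ∑ l, al k ^ 2 * Q k l = 2 * (Matrix.trace (A * Aᴴ)).re := by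
      have : ∀ k, ∑ l, al k ^ 2 * Q k l = al k ^ 2 := by
        intro k
        rw [← Finset.mul_sum, hrow, mul_one]
      rw [Finset.sum_congr rfl fun k _ => this k, sum_sq_eigenvalues hH,
        trace_dil_mul_dil A]
      simp [Complex.mul_re]
    have F2b : ∑ k, ∑ l, be l ^ 2 * Q k l = 2 * (Matrix.trace (B * Bᴴ)).re := by
      rw [Finset.sum_comm]
      have : ∀ l, ∑ k, be l ^ 2 * Q k l = be l ^ 2 := by
        intro l
        rw [← Finset.mul_sum, hcol, mul_one]
      rw [Finset.sum_congr rfl fun l _ => this l, sum_sq_eigenvalues hK,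
        trace_dil_mul_dil B]
      simp [Complex.mul_re]
    have F2 : ∑ k, ∑ l, (al k + be l) ^ 2 * Q k l ≤ 4 * trS := by
      have hpt : ∀ k l, (al k + be l) ^ 2 * Q k l
          ≤ 2 * (al k ^ 2 * Q k l) + 2 * (be l ^ 2 * Q k l) := by
        intro k l
        have h := hQ0 k l
        nlinarith [sq_nonneg (al k - be l)]
      calc ∑ k, ∑ l, (al k + be l) ^ 2 * Q k l
          ≤ ∑ k, ∑ l, (2 * (al k ^ 2 * Q k l) + 2 * (be l ^ 2 * Q k l)) :=
            Finset.sum_le_sum fun k _ => Finset.sum_le_sum fun l _ => hpt k l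
        _ = 2 * (∑ k, ∑ l, al k ^ 2 * Q k l) + 2 * (∑ k, ∑ l, be l ^ 2 * Q k l) := by
            simp only [Finset.sum_add_distrib, Finset.mul_sum]
        _ ≤ 4 * trS := by
            rw [F2a, F2b, htrS_split]
            have := trace_mul_conjTranspose_re_nonneg A
            have := trace_mul_conjTranspose_re_nonneg B
            linarith
    -- F3 : E^2 ≤ 8 * (trD * trS)
    have F3 : E ^ 2 ≤ 8 * (trD * trS) := by
      have key1 : ∀ k l, (|al k - be l| * Real.sqrt (Q k l))
          * (|al k + be l| * Real.sqrt (Q k l)) = |al k ^ 2 - be l ^ 2| * Q k l := by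
        intro k l
        rw [show (|al k - be l| * Real.sqrt (Q k l)) * (|al k + be l| * Real.sqrt (Q k l))
            = |al k - be l| * |al k + be l| * (Real.sqrt (Q k l) * Real.sqrt (Q k l)) by ring,
          Real.mul_self_sqrt (hQ0 k l), ← abs_mul]
        congr 2
        ring
      have key2 : ∀ k l, (|al k - be l| * Real.sqrt (Q k l)) ^ 2 = (al k - be l) ^ 2 * Q k l := by
        intro k l
        rw [mul_pow, sq_abs, Real.sq_sqrt (hQ0 k l)]
      have key3 : ∀ k l, (|al k + be l| * Real.sqrt (Q k l)) ^ 2 = (al k + be l) ^ 2 * Q k l := by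
        intro k l
        rw [mul_pow, sq_abs, Real.sq_sqrt (hQ0 k l)]
      have hCS0 := Finset.sum_mul_sq_le_sq_mul_sq
        (Finset.univ : Finset ((Fin p ⊕ Fin n) × (Fin p ⊕ Fin n)))
        (fun kl => |al kl.1 - be kl.2| * Real.sqrt (Q kl.1 kl.2))
        (fun kl => |al kl.1 + be kl.2| * Real.sqrt (Q kl.1 kl.2))
      rw [Fintype.sum_prod_type, Fintype.sum_prod_type, Fintype.sum_prod_type] at hCS0
      simp only [key1, key2, key3] at hCS0
      have hCS : E ^ 2 ≤ (∑ k, ∑ l, (al k - be l) ^ 2 * Q k l)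
          * (∑ k, ∑ l, (al k + be l) ^ 2 * Q k l) := by
        rw [hE]
        exact hCS0
      calc E ^ 2 ≤ (∑ k, ∑ l, (al k - be l) ^ 2 * Q k l)
            * (∑ k, ∑ l, (al k + be l) ^ 2 * Q k l) := hCS
        _ ≤ (2 * trD) * (4 * trS) := by
            rw [F1]
            apply mul_le_mul_of_nonneg_left F2 (by linarith)
        _ = 8 * (trD * trS) := by ring
    -- KEY : the Levy-set membership criterion
    have KEY : ∀ ε : ℝ, 0 < ε → E ≤ 2 * p * ε ^ 2 → ε ∈ SS := by
      intro ε hε hEε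
      have hEdiv : E / ε ≤ 2 * p * ε := by
        rw [div_le_iff₀ hε]
        calc E ≤ 2 * p * ε ^ 2 := hEε
          _ = 2 * p * ε * ε := by ring
      refine ⟨hε, fun x => ⟨?_, ?_⟩⟩
      · -- F (x - ε) - ε ≤ G x
        by_cases hxe : x - ε < 0
        · have hF0 : F (x - ε) = 0 := by
            rw [hF]
            unfold esd
            rw [Finset.filter_eq_empty_iff.mpr, Finset.card_empty]
            · simp
            · intro i _
              push_neg
              calc x - ε < 0 := hxe
                _ ≤ _ := eigenvalues_self_mul_conjTranspose_nonneg A i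
          rw [hF0]
          linarith [hGnonneg x]
        · push_neg at hxe
          have hx0 : (0:ℝ) ≤ x := by linarith
          set S : Finset (Fin p ⊕ Fin n) := Finset.univ.filter fun k => al k ^ 2 ≤ x - ε
            with hSdef
          set T : Finset (Fin p ⊕ Fin n) := Finset.univ.filter fun l => be l ^ 2 ≤ x
            with hTdef
          have hgap : ∀ k ∈ S, ∀ l ∉ T, ε ≤ |al k ^ 2 - be l ^ 2| := by
            intro k hk l hl
            rw [hSdef, Finset.mem_filter] at hk
            rw [hTdef, Finset.mem_filter] at hl
            push_neg at hl
            have h1 : x < be l ^ 2 := hl (Finset.mem_univ l)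
            calc ε ≤ be l ^ 2 - al k ^ 2 := by linarith [hk.2]
              _ ≤ |al k ^ 2 - be l ^ 2| := by
                  rw [abs_sub_comm]
                  exact le_abs_self _
          have hcnt := count_le Q hQ0 hrow hcol (fun k => al k ^ 2) (fun l => be l ^ 2)
            hε S T hgap
          set NA := (Finset.univ.filter
            fun i => (Matrix.isHermitian_mul_conjTranspose_self A).eigenvalues i ≤ x - ε).card
            with hNA
          set NB := (Finset.univ.filter
            fun i => (Matrix.isHermitian_mul_conjTranspose_self B).eigenvalues i ≤ x).card
            with hNB
          have hcA' : (S.card : ℝ) + p = 2 * NA + n := by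
            exact_mod_cast congrArg (Nat.cast : ℕ → ℝ) (dil_count A (x - ε) hxe)
          have hcB' : (T.card : ℝ) + p = 2 * NB + n := by
            exact_mod_cast congrArg (Nat.cast : ℕ → ℝ) (dil_count B x hx0)
          have hNANB : (NA : ℝ) ≤ NB + p * ε := by
            have : (S.card : ℝ) ≤ T.card + E / ε := hcnt
            linarith
          have hFx : F (x - ε) = (p:ℝ)⁻¹ * NA := by rw [hF]; rfl
          have hGx : G x = (p:ℝ)⁻¹ * NB := by rw [hG]; rfl
          rw [hFx, hGx]
          have hm := mul_le_mul_of_nonneg_left hNANB (inv_nonneg.mpr hpR.le)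
          rw [mul_add] at hm
          have : (p:ℝ)⁻¹ * ((p:ℝ) * ε) = ε := by
            field_simp
          linarith
      · -- G x ≤ F (x + ε) + ε
        by_cases hx : x < 0
        · have hG0 : G x = 0 := by
            rw [hG]
            unfold esd
            rw [Finset.filter_eq_empty_iff.mpr, Finset.card_empty]
            · simp
            · intro i _
              push_neg
              calc x < 0 := hx
                _ ≤ _ := eigenvalues_self_mul_conjTranspose_nonneg B i
          rw [hG0]
          linarith [hFnonneg (x + ε)]
        · push_neg at hx
          have hxe0 : (0:ℝ) ≤ x + ε := by linarith
          set S : Finset (Fin p ⊕ Fin n) := Finset.univ.filter fun l => be l ^ 2 ≤ x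
            with hSdef
          set T : Finset (Fin p ⊕ Fin n) := Finset.univ.filter fun k => al k ^ 2 ≤ x + ε
            with hTdef
          have hgap : ∀ l ∈ S, ∀ k ∉ T, ε ≤ |be l ^ 2 - al k ^ 2| := by
            intro l hl k hk
            rw [hSdef, Finset.mem_filter] at hl
            rw [hTdef, Finset.mem_filter] at hk
            push_neg at hk
            have h1 : x + ε < al k ^ 2 := hk (Finset.mem_univ k)
            calc ε ≤ al k ^ 2 - be l ^ 2 := by linarith [hl.2]
              _ ≤ |be l ^ 2 - al k ^ 2| := by
                  rw [abs_sub_comm]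
                  exact le_abs_self _
          have hcnt := count_le (fun l k => Q k l) (fun l k => hQ0 k l)
            (fun l => hcol l) (fun k => hrow k) (fun l => be l ^ 2) (fun k => al k ^ 2)
            hε S T hgap
          have hEswap : (∑ l, ∑ k, |be l ^ 2 - al k ^ 2| * Q k l) = E := by
            rw [hE, Finset.sum_comm]
            exact Finset.sum_congr rfl fun l _ => Finset.sum_congr rfl fun k _ => by
              rw [abs_sub_comm]
          rw [hEswap] at hcnt
          set NA := (Finset.univ.filter
            fun i => (Matrix.isHermitian_mul_conjTranspose_self A).eigenvalues i ≤ x + ε).card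
            with hNA
          set NB := (Finset.univ.filter
            fun i => (Matrix.isHermitian_mul_conjTranspose_self B).eigenvalues i ≤ x).card
            with hNB
          have hcA' : (T.card : ℝ) + p = 2 * NA + n := by
            exact_mod_cast congrArg (Nat.cast : ℕ → ℝ) (dil_count A (x + ε) hxe0)
          have hcB' : (S.card : ℝ) + p = 2 * NB + n := by
            exact_mod_cast congrArg (Nat.cast : ℕ → ℝ) (dil_count B x hx)
          have hNBNA : (NB : ℝ) ≤ NA + p * ε := by
            have : (S.card : ℝ) ≤ T.card + E / ε := hcnt
            linarith
          have hFx : F (x + ε) = (p:ℝ)⁻¹ * NA := by rw [hF]; rfl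
          have hGx : G x = (p:ℝ)⁻¹ * NB := by rw [hG]; rfl
          rw [hFx, hGx]
          have hm := mul_le_mul_of_nonneg_left hNBNA (inv_nonneg.mpr hpR.le)
          rw [mul_add] at hm
          have : (p:ℝ)⁻¹ * ((p:ℝ) * ε) = ε := by
            field_simp
          linarith
    -- conclude
    set c : ℝ := Real.sqrt (E / (2 * p)) with hc
    have hc0 : 0 ≤ c := Real.sqrt_nonneg _
    have hc2 : c ^ 2 = E / (2 * p) := Real.sq_sqrt (by positivity)
    have hmem : ∀ δ : ℝ, 0 < δ → c + δ ∈ SS := by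
      intro δ hδ
      apply KEY (c + δ) (by linarith)
      have h1 : c ^ 2 ≤ (c + δ) ^ 2 := by nlinarith
      have h2 : 2 * p * c ^ 2 = E := by
        rw [hc2]
        field_simp
      nlinarith
    have hBdd : BddBelow SS := ⟨0, fun ε hε => hε.1.le⟩
    have hne : SS.Nonempty := ⟨c + 1, hmem 1 one_pos⟩
    have hL0 : 0 ≤ levyDist F G := by
      rw [hLD]
      exact le_csInf hne fun ε hε => hε.1.le
    have hL_le : levyDist F G ≤ c := by
      rw [hLD]
      by_contra hlt
      push_neg at hlt
      have h2 := csInf_le hBdd (hmem ((sInf SS - c) / 2) (by linarith))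
      linarith
    calc levyDist F G ^ 4 ≤ c ^ 4 := pow_le_pow_left₀ hL0 hL_le 4
      _ = (c ^ 2) ^ 2 := by ring
      _ = (E / (2 * p)) ^ 2 := by rw [hc2]
      _ = E ^ 2 / (2 * p) ^ 2 := by rw [div_pow]
      _ ≤ 2 / (p : ℝ) ^ 2 * trD * trS := by
          rw [div_le_iff₀ (by positivity)]
          have expand : 2 / (p : ℝ) ^ 2 * trD * trS * (2 * p) ^ 2 = 8 * (trD * trS) := by
            field_simp
            ring
          rw [expand]
          exact F3
end
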